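/- Two-point converse for systematic linear codes (Theorem 3): let f be a systematic linear code of rate 1/ρ with generator [I | A] over 𝔽₂, and fix ε₁ > ε₂, δ₁ ≤ ε₁/2, γ = ε₁ − 2δ₁. If BER_f(ε₁) ≤ δ₁, then BER_f(ε₂) ≥ (ε₂ − ((1−ε₂)/(1−ε₁))·[(ε₂/ε₁)γ + (ρ−1)(1−ε₁) − γ])/2. -/

import Mathlib

open Finset in
/-- Bit error rate of (encoder `f`, decoder `g`) over `BEC_ε`: sources are i.i.d.
`Ber(1/2)`, each coded bit is independently erased (replaced by `none`) with
probability `ε`, and the BER is the expected fraction of wrongly decoded data bits. -/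
noncomputable def becBER (k : ℕ) {ι : Type*} [Fintype ι] [DecidableEq ι]
    (f : (Fin k → ZMod 2) → ι → ZMod 2)
    (g : (ι → Option (ZMod 2)) → Fin k → ZMod 2) (ε : ℝ) : ℝ :=
  (1 / k) * ∑ s : Fin k → ZMod 2, (1 / 2 ^ k : ℝ) *
    ∑ E : Finset ι, ε ^ E.card * (1 - ε) ^ (Fintype.card ι - E.card) *
      ((univ.filter fun i : Fin k =>
        g (fun j => if j ∈ E then none else some (f s j)) i ≠ s i).card : ℝ)


open Finset

namespace TwoPointAux

variable {σ : Type*} [DecidableEq σ]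

/-- Bernoulli(q) product weight of a subset `S` of base set `s`. -/
noncomputable def bw (q : ℝ) (s S : Finset σ) : ℝ :=
  q ^ S.card * (1 - q) ^ (s.card - S.card)

lemma bw_nonneg {q : ℝ} (h0 : 0 ≤ q) (h1 : q ≤ 1) (s S : Finset σ) : 0 ≤ bw q s S :=
  mul_nonneg (pow_nonneg h0 _) (pow_nonneg (by linarith) _)

lemma sum_pow_card (a b : ℝ) (u : Finset σ) :
    ∑ D ∈ u.powerset, a ^ D.card * b ^ (u.card - D.card) = (a + b) ^ u.card := by
  have h := Finset.prod_add (fun _ : σ => a) (fun _ => b) u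
  simp only [prod_const] at h
  rw [h, Finset.sum_congr rfl (fun D hD => ?_)]
  rw [Finset.card_sdiff_of_subset (mem_powerset.1 hD)]

lemma sum_bw (q : ℝ) (s : Finset σ) : ∑ S ∈ s.powerset, bw q s S = 1 := by
  have := sum_pow_card q (1 - q) s
  simp only [add_sub_cancel, one_pow] at this
  simpa [bw] using this

lemma sum_bw_ind (q : ℝ) {j : σ} {s : Finset σ} (hj : j ∈ s) :
    ∑ S ∈ s.powerset, bw q s S * (if j ∈ S then (1:ℝ) else 0) = q := by
  have hjs : j ∉ s.erase j := notMem_erase j s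
  have hins : insert j (s.erase j) = s := insert_erase hj
  rw [← hins, Finset.sum_powerset_insert hjs]
  have h1 : ∀ t ∈ (s.erase j).powerset,
      bw q (insert j (s.erase j)) t * (if j ∈ t then (1:ℝ) else 0) = 0 := by
    intro t ht
    have : j ∉ t := fun hmem => hjs (mem_powerset.1 ht hmem)
    simp [this]
  rw [Finset.sum_congr rfl h1, Finset.sum_const_zero, zero_add]
  have h2 : ∀ t ∈ (s.erase j).powerset,
      bw q (insert j (s.erase j)) (insert j t) * (if j ∈ insert j t then (1:ℝ) else 0)
        = q * bw q (s.erase j) t := by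
    intro t ht
    have hjt : j ∉ t := fun hmem => hjs (mem_powerset.1 ht hmem)
    have hts : t ⊆ s.erase j := mem_powerset.1 ht
    have hcard : t.card ≤ (s.erase j).card := card_le_card hts
    simp only [mem_insert, true_or, if_pos, mul_one]
    rw [bw, bw, card_insert_of_notMem hjt, card_insert_of_notMem hjs]
    have : (s.erase j).card + 1 - (t.card + 1) = (s.erase j).card - t.card := by omega
    rw [this, pow_succ]
    ring
  rw [Finset.sum_congr rfl h2, ← Finset.mul_sum, sum_bw, mul_one]

lemma sum_bw_inter (q : ℝ) {B s : Finset σ} (hB : B ⊆ s) :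
    ∑ S ∈ s.powerset, bw q s S * ((B ∩ S).card : ℝ) = q * B.card := by
  have key : ∀ S : Finset σ, ((B ∩ S).card : ℝ) = ∑ j ∈ B, (if j ∈ S then (1:ℝ) else 0) := by
    intro S
    rw [Finset.sum_ite, Finset.sum_const_zero, add_zero, Finset.sum_const,
      Finset.filter_mem_eq_inter]
    simp
  rw [Finset.sum_congr rfl (fun S _ => by rw [key S]), ]
  rw [Finset.sum_congr rfl (fun S _ => Finset.mul_sum _ _ _), Finset.sum_comm]
  rw [Finset.sum_congr rfl (fun j hj => sum_bw_ind q (hB hj)), Finset.sum_const,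
    nsmul_eq_mul, mul_comm]

lemma sum_bw_card (q : ℝ) (s : Finset σ) :
    ∑ S ∈ s.powerset, bw q s S * (S.card : ℝ) = q * s.card := by
  have := sum_bw_inter q (le_refl s)
  rw [Finset.sum_congr rfl (fun S hS => ?_)] at this
  · exact this
  · rw [Finset.inter_eq_right.2 (mem_powerset.1 hS)]


lemma bw_conv (p q : ℝ) {S s : Finset σ} (hS : S ⊆ s) :
    ∑ S' ∈ s.powerset.filter (fun S' => S ⊆ S'), bw p s S' * bw q S' S = bw (p*q) s S := by
  have key : ∀ D ∈ (s \ S).powerset,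
      bw p s (S ∪ D) * bw q (S ∪ D) S
        = (p*q) ^ S.card * ((p*(1-q)) ^ D.card * (1-p) ^ ((s \ S).card - D.card)) := by
    intro D hD
    have hDs : D ⊆ s \ S := mem_powerset.1 hD
    have hd : Disjoint S D := Finset.disjoint_left.2
      fun a haS haD => (Finset.mem_sdiff.1 (hDs haD)).2 haS
    have hu : S ∪ D ⊆ s := union_subset hS (hDs.trans (sdiff_subset))
    have hcu : (S ∪ D).card = S.card + D.card := card_union_of_disjoint hd
    have hcs : (s \ S).card = s.card - S.card := card_sdiff_of_subset hS
    have hle : S.card + D.card ≤ s.card := hcu ▸ card_le_card hu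
    rw [bw, bw, hcu, hcs]
    have e1 : s.card - (S.card + D.card) = (s.card - S.card) - D.card := by omega
    have e2 : S.card + D.card - S.card = D.card := by omega
    have e3 : s.card - S.card - D.card = (s.card - S.card) - D.card := rfl
    rw [e1, e2, pow_add, mul_pow, mul_pow]
    ring
  rw [Finset.sum_nbij' (fun S' => S' \ S) (fun D => S ∪ D) ?_ ?_ ?_ ?_ ?_]
  · rw [Finset.sum_congr rfl key, ← Finset.mul_sum, sum_pow_card]
    have : p * (1-q) + (1-p) = 1 - p*q := by ring
    rw [this, bw, card_sdiff_of_subset hS]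
  · intro a ha
    simp only [mem_filter, mem_powerset] at ha
    exact mem_powerset.2 (sdiff_subset_sdiff ha.1 (le_refl S))
  · intro D hD
    have hDs : D ⊆ s \ S := mem_powerset.1 hD
    simp only [mem_filter, mem_powerset]
    exact ⟨union_subset hS (hDs.trans sdiff_subset), subset_union_left⟩
  · intro a ha
    simp only [mem_filter, mem_powerset] at ha
    exact union_sdiff_of_subset ha.2
  · intro D hD
    have hDs : D ⊆ s \ S := mem_powerset.1 hD
    have hd : Disjoint S D := Finset.disjoint_left.2
      fun a haS haD => (Finset.mem_sdiff.1 (hDs haD)).2 haS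
    exact union_sdiff_cancel_left hd
  · intro a ha
    simp only [mem_filter, mem_powerset] at ha
    rw [show S ∪ (a \ S) = a from union_sdiff_of_subset ha.2]

lemma bw_thin (p q : ℝ) (s : Finset σ) (X : Finset σ → ℝ) :
    ∑ S' ∈ s.powerset, bw p s S' * ∑ S ∈ S'.powerset, bw q S' S * X S
      = ∑ S ∈ s.powerset, bw (p*q) s S * X S := by
  have step1 : ∀ S' ∈ s.powerset,
      bw p s S' * ∑ S ∈ S'.powerset, bw q S' S * X S
        = ∑ S ∈ s.powerset, (if S ⊆ S' then bw p s S' * bw q S' S else 0) * X S := by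
    intro S' hS'
    rw [Finset.mul_sum]
    have hpe : S'.powerset = s.powerset.filter (fun T => T ⊆ S') := by
      ext T
      simp only [mem_powerset, mem_filter]
      exact ⟨fun h => ⟨h.trans (mem_powerset.1 hS'), h⟩, fun h => h.2⟩
    rw [hpe, Finset.sum_filter]
    refine Finset.sum_congr rfl fun T _ => ?_
    by_cases hT : T ⊆ S' <;> simp [hT, mul_assoc]
  rw [Finset.sum_congr rfl step1, Finset.sum_comm]
  refine Finset.sum_congr rfl fun S hS => ?_
  rw [← Finset.sum_mul, ← Finset.sum_filter, bw_conv p q (mem_powerset.1 hS)]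


section LinAlg

open Submodule Module

variable {k m : ℕ} (A : Matrix (Fin k) (Fin m) (ZMod 2))

/-- column `t` of `A` restricted (zero-padded) to rows in `R`. -/
def colv (R : Finset (Fin k)) (t : Fin m) : Fin k → ZMod 2 :=
  fun i => if i ∈ R then A i t else 0

/-- span of the columns indexed by `T` of the row-submatrix `A_{R,·}`. -/
def Wspan (R : Finset (Fin k)) (T : Finset (Fin m)) : Submodule (ZMod 2) (Fin k → ZMod 2) :=
  Submodule.span (ZMod 2) (colv A R '' ↑T)

noncomputable def rk (R : Finset (Fin k)) (T : Finset (Fin m)) : ℕ :=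
  finrank (ZMod 2) (Wspan A R T)

noncomputable def good (R : Finset (Fin k)) (T : Finset (Fin m)) : Finset (Fin k) :=
  @Finset.filter _ (fun i => Pi.single i (1:ZMod 2) ∈ Wspan A R T) (Classical.decPred _) R

noncomputable def hr (R : Finset (Fin k)) (T : Finset (Fin m)) : ℕ := (good A R T).card

lemma good_subset (R : Finset (Fin k)) (T : Finset (Fin m)) : good A R T ⊆ R := by
  classical
  intro i hi
  unfold good at hi
  exact Finset.mem_of_mem_filter i hi

lemma li_singles (s : Finset (Fin k)) :
    LinearIndependent (ZMod 2)
      (fun i : s => (Pi.single (i : Fin k) (1 : ZMod 2) : Fin k → ZMod 2)) := by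
  have h := (Pi.basisFun (ZMod 2) (Fin k)).linearIndependent
  have h2 := h.comp (fun i : s => (i : Fin k)) Subtype.val_injective
  convert h2 using 1
  funext i
  simp [Pi.basisFun_apply]

lemma finrank_span_singles (s : Finset (Fin k)) :
    finrank (ZMod 2) (Submodule.span (ZMod 2)
      (Set.range (fun i : s =>
        (Pi.single (i : Fin k) (1 : ZMod 2) : Fin k → ZMod 2)))) = s.card := by
  rw [finrank_span_eq_card (li_singles s), Fintype.card_coe]

lemma card_le_finrank_of_singles_le {s : Finset (Fin k)}
    {W : Submodule (ZMod 2) (Fin k → ZMod 2)} [Module.Finite (ZMod 2) W]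
    (h : ∀ i ∈ s, Pi.single i (1:ZMod 2) ∈ W) : s.card ≤ finrank (ZMod 2) W := by
  rw [← finrank_span_singles s]
  refine Submodule.finrank_mono ?_
  rw [Submodule.span_le]
  rintro _ ⟨i, rfl⟩
  exact h i i.2

lemma hr_le_rk (R : Finset (Fin k)) (T : Finset (Fin m)) : hr A R T ≤ rk A R T := by
  classical
  refine card_le_finrank_of_singles_le ?_
  intro i hi
  exact (Finset.mem_filter.1 hi).2

lemma rk_le_card (R : Finset (Fin k)) (T : Finset (Fin m)) : rk A R T ≤ T.card := by
  classical
  have h1 : colv A R '' ↑T = ↑(T.image (colv A R)) := by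
    rw [Finset.coe_image]
  have h2 : rk A R T = finrank (ZMod 2)
      (Submodule.span (ZMod 2) (↑(T.image (colv A R)) : Set (Fin k → ZMod 2))) := by
    rw [rk, Wspan, h1]
  rw [h2]
  exact le_trans (finrank_span_finset_le_card _) (Finset.card_image_le)

/-- zero out the coordinates outside `R`. -/
def projR (R : Finset (Fin k)) : (Fin k → ZMod 2) →ₗ[ZMod 2] (Fin k → ZMod 2) where
  toFun x := fun i => if i ∈ R then x i else 0
  map_add' x y := by funext i; by_cases h : i ∈ R <;> simp [h]
  map_smul' c x := by funext i; by_cases h : i ∈ R <;> simp [h]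

lemma projR_colv {R R' : Finset (Fin k)} (h : R ⊆ R') (t : Fin m) :
    projR R (colv A R' t) = colv A R t := by
  funext i
  by_cases hi : i ∈ R
  · simp [projR, colv, hi, h hi]
  · simp [projR, colv, hi]

lemma projR_single {R : Finset (Fin k)} {i : Fin k} (hi : i ∉ R) :
    projR R (Pi.single i (1:ZMod 2)) = 0 := by
  funext j
  by_cases hj : j ∈ R
  · have : j ≠ i := fun h => hi (h ▸ hj)
    simp [projR, hj, Pi.single_apply, this]
  · simp [projR, hj]

lemma map_Wspan {R R' : Finset (Fin k)} (h : R ⊆ R') (T : Finset (Fin m)) :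
    (Wspan A R' T).map (projR R) = Wspan A R T := by
  rw [Wspan, Submodule.map_span, ← Set.image_comp]
  congr 1
  apply Set.image_congr
  intro t _
  exact projR_colv A h t

lemma rk_proj_bound {R R' : Finset (Fin k)} (h : R ⊆ R') (T : Finset (Fin m)) :
    rk A R T + (good A R' T \ R).card ≤ rk A R' T := by
  classical
  set W' := Wspan A R' T with hW'
  have fd : Module.Finite (ZMod 2) W' := inferInstance
  set f : W' →ₗ[ZMod 2] (Fin k → ZMod 2) := (projR R).comp W'.subtype with hf
  have hrange : LinearMap.range f = Wspan A R T := by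
    rw [hf, LinearMap.range_comp, Submodule.range_subtype, map_Wspan A h]
  have hsum := LinearMap.finrank_range_add_finrank_ker f
  have h1 : finrank (ZMod 2) (LinearMap.range f) = rk A R T := by rw [hrange]; rfl
  have hker : (good A R' T \ R).card ≤ finrank (ZMod 2) (LinearMap.ker f) := by
    rw [← Submodule.finrank_map_subtype_eq W' (LinearMap.ker f)]
    refine card_le_finrank_of_singles_le ?_
    intro i hi
    have hig : i ∈ good A R' T := (Finset.mem_sdiff.1 hi).1
    have hiR : i ∉ R := (Finset.mem_sdiff.1 hi).2
    have hiW : Pi.single i (1:ZMod 2) ∈ W' := (Finset.mem_filter.1 hig).2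
    refine ⟨⟨Pi.single i (1:ZMod 2), hiW⟩, ?_, rfl⟩
    have : f ⟨Pi.single i (1:ZMod 2), hiW⟩ = 0 := by
      simp only [hf, LinearMap.comp_apply, Submodule.subtype_apply]
      exact projR_single hiR
    exact LinearMap.mem_ker.2 this
  have h2 : finrank (ZMod 2) W' = rk A R' T := rfl
  omega

lemma Wspan_mono_right (R : Finset (Fin k)) {T T' : Finset (Fin m)} (h : T ⊆ T') :
    Wspan A R T ≤ Wspan A R T' :=
  Submodule.span_mono (Set.image_mono (by exact_mod_cast h))

lemma exists_col_basis (R : Finset (Fin k)) (T' : Finset (Fin m)) :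
    ∃ B ⊆ T', B.card = rk A R T' ∧ ∀ T ⊆ T', (B ∩ T).card ≤ rk A R T := by
  classical
  obtain ⟨b, hb_sub, hb_span, hb_li⟩ := exists_linearIndependent (ZMod 2) (colv A R '' ↑T')
  have hb_fin : b.Finite := (T'.finite_toSet.image _).subset hb_sub
  haveI := hb_fin.fintype
  have hchoose : ∀ v : b, ∃ t, t ∈ T' ∧ colv A R t = v := by
    rintro ⟨v, hv⟩
    obtain ⟨t, ht, rfl⟩ := hb_sub hv
    exact ⟨t, by exact_mod_cast ht, rfl⟩
  choose fc hfc1 hfc2 using hchoose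
  have finj : Function.Injective fc := by
    intro v w hvw
    have : (v : Fin k → ZMod 2) = w := by rw [← hfc2 v, ← hfc2 w, hvw]
    exact Subtype.ext this
  refine ⟨Finset.univ.image fc, ?_, ?_, ?_⟩
  · intro t ht
    obtain ⟨v, _, rfl⟩ := Finset.mem_image.1 ht
    exact hfc1 v
  · rw [Finset.card_image_of_injective _ finj, Finset.card_univ, rk, Wspan, ← hb_span,
      finrank_span_set_eq_card hb_li, Set.toFinset_card]
  · intro T hT
    set B := Finset.univ.image fc with hB
    have hmem : ∀ j : (B ∩ T : Finset (Fin m)), colv A R (j : Fin m) ∈ b := by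
      rintro ⟨j, hj⟩
      obtain ⟨v, _, rfl⟩ := Finset.mem_image.1 (Finset.mem_inter.1 hj).1
      rw [hfc2 v]; exact v.2
    set e : (B ∩ T : Finset (Fin m)) → b := fun j => ⟨colv A R (j : Fin m), hmem j⟩ with he
    have einj : Function.Injective e := by
      rintro ⟨j, hj⟩ ⟨j', hj'⟩ hjj
      have hcol : colv A R j = colv A R j' := congrArg Subtype.val hjj
      obtain ⟨v, _, hv⟩ := Finset.mem_image.1 (Finset.mem_inter.1 hj).1
      obtain ⟨w, _, hw⟩ := Finset.mem_image.1 (Finset.mem_inter.1 hj').1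
      have hv' : (v : Fin k → ZMod 2) = colv A R j := by rw [← hv]; exact (hfc2 v).symm
      have hw' : (w : Fin k → ZMod 2) = colv A R j' := by rw [← hw]; exact (hfc2 w).symm
      have hvw : v = w := Subtype.ext (by rw [hv', hw']; exact hcol)
      exact Subtype.ext (show j = j' by rw [← hv, ← hw, hvw])
    have hli : LinearIndependent (ZMod 2)
        (fun j : (B ∩ T : Finset (Fin m)) => colv A R (j : Fin m)) :=
      hb_li.comp e einj
    rw [← Fintype.card_coe (B ∩ T), ← finrank_span_eq_card hli]
    refine Submodule.finrank_mono ?_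
    rw [Submodule.span_le]
    rintro _ ⟨j, rfl⟩
    refine Submodule.subset_span ⟨(j : Fin m), ?_, rfl⟩
    exact_mod_cast (Finset.mem_inter.1 j.2).2


lemma exists_kernel_vector {R : Finset (Fin k)} (T : Finset (Fin m)) {i : Fin k}
    (hi : i ∈ R) (hng : i ∉ good A R T) :
    ∃ x : Fin k → ZMod 2, x i = 1 ∧ (∀ j, j ∉ R → x j = 0) ∧
      ∀ t ∈ T, Matrix.vecMul x A t = 0 := by
  classical
  have hnotW : Pi.single i (1:ZMod 2) ∉ Wspan A R T := by
    intro hW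
    exact hng (by unfold good; exact Finset.mem_filter.2 ⟨hi, hW⟩)
  set W := Wspan A R T with hWdef
  have hW2 : W.dualAnnihilator.dualCoannihilator = W :=
    Subspace.dualAnnihilator_dualCoannihilator_eq
  have hnot : ¬ (∀ φ ∈ W.dualAnnihilator, φ (Pi.single i (1:ZMod 2)) = 0) := by
    intro hall
    exact hnotW (hW2 ▸ (Submodule.mem_dualCoannihilator _).2 hall)
  push_neg at hnot
  obtain ⟨φ, hφW, hφi⟩ := hnot
  set x : Fin k → ZMod 2 := fun j => if j ∈ R then φ (Pi.single j 1) else 0 with hx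
  have hexp : ∀ y : Fin k → ZMod 2, φ y = ∑ j, y j * φ (Pi.single j 1) := by
    intro y
    rw [LinearMap.pi_apply_eq_sum_univ φ y]
    refine Finset.sum_congr rfl fun j _ => ?_
    rw [smul_eq_mul]
    congr 2
    funext j'
    rw [Pi.single_apply]
    by_cases h : j' = j
    · simp [h]
    · simp only [if_neg h, if_neg (fun hh : j = j' => h hh.symm)]
  refine ⟨x, ?_, ?_, ?_⟩
  · have hxi : x i = φ (Pi.single i 1) := by simp [hx, hi]
    have hne : x i ≠ 0 := by rw [hxi]; exact hφi
    revert hne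
    generalize x i = a
    revert a
    decide
  · intro j hj
    simp [hx, hj]
  · intro t ht
    have hcolW : colv A R t ∈ W := Submodule.subset_span ⟨t, by exact_mod_cast ht, rfl⟩
    have h0 : φ (colv A R t) = 0 := (Submodule.mem_dualAnnihilator φ).1 hφW _ hcolW
    have hsum : φ (colv A R t) = ∑ j, x j * A j t := by
      rw [hexp]
      refine Finset.sum_congr rfl fun j _ => ?_
      by_cases hjR : j ∈ R
      · simp [colv, hx, hjR, mul_comm]
      · simp [colv, hx, hjR]
    have hvm : Matrix.vecMul x A t = ∑ j, x j * A j t := by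
      simp [Matrix.vecMul, dotProduct]
    rw [hvm, ← hsum, h0]

end LinAlg


section Split

variable {k m : ℕ}

def mkE (R : Finset (Fin k)) (Tc : Finset (Fin m)) : Finset (Fin k ⊕ Fin m) :=
  R.map ⟨Sum.inl, Sum.inl_injective⟩ ∪ Tc.map ⟨Sum.inr, Sum.inr_injective⟩

@[simp] lemma mem_mkE_inl {R : Finset (Fin k)} {Tc : Finset (Fin m)} {i : Fin k} :
    Sum.inl i ∈ mkE R Tc ↔ i ∈ R := by
  simp [mkE]

@[simp] lemma mem_mkE_inr {R : Finset (Fin k)} {Tc : Finset (Fin m)} {t : Fin m} :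
    Sum.inr t ∈ mkE R Tc ↔ t ∈ Tc := by
  simp [mkE]

lemma card_mkE (R : Finset (Fin k)) (Tc : Finset (Fin m)) :
    (mkE R Tc).card = R.card + Tc.card := by
  rw [mkE, Finset.card_union_of_disjoint, Finset.card_map, Finset.card_map]
  rw [Finset.disjoint_left]
  rintro a ha hb
  obtain ⟨i, _, rfl⟩ := Finset.mem_map.1 ha
  obtain ⟨t, _, h⟩ := Finset.mem_map.1 hb
  exact absurd h (by simp)

lemma sum_split (f : Finset (Fin k ⊕ Fin m) → ℝ) :
    ∑ E : Finset (Fin k ⊕ Fin m), f E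
      = ∑ R : Finset (Fin k), ∑ Tc : Finset (Fin m), f (mkE R Tc) := by
  have hbij : Function.Bijective
      (fun p : Finset (Fin k) × Finset (Fin m) => mkE p.1 p.2) := by
    constructor
    · rintro ⟨R, Tc⟩ ⟨R', Tc'⟩ hh
      have h : mkE R Tc = mkE R' Tc' := hh
      have hR : R = R' := by
        ext i
        constructor
        · intro hi; exact mem_mkE_inl.1 (h ▸ mem_mkE_inl.2 hi)
        · intro hi; exact mem_mkE_inl.1 (h ▸ mem_mkE_inl.2 hi)
      have hT : Tc = Tc' := by
        ext t
        constructor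
        · intro ht; exact mem_mkE_inr.1 (h ▸ mem_mkE_inr.2 ht)
        · intro ht; exact mem_mkE_inr.1 (h ▸ mem_mkE_inr.2 ht)
      simp [hR, hT]
    · intro E
      classical
      refine ⟨⟨E.preimage Sum.inl (Sum.inl_injective.injOn),
              E.preimage Sum.inr (Sum.inr_injective.injOn)⟩, ?_⟩
      ext x
      cases x with
      | inl i => simp [Finset.mem_preimage]
      | inr t => simp [Finset.mem_preimage]
  have h1 : ∑ p : Finset (Fin k) × Finset (Fin m), f (mkE p.1 p.2)
      = ∑ E : Finset (Fin k ⊕ Fin m), f E :=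
    Fintype.sum_bijective _ hbij _ _ fun p => rfl
  rw [← h1, Fintype.sum_prod_type]

lemma bw_mkE (p : ℝ) (R : Finset (Fin k)) (Tc : Finset (Fin m)) :
    bw p Finset.univ (mkE R Tc) = bw p Finset.univ R * bw p Finset.univ Tc := by
  have hR : R.card ≤ k := by
    simpa using Finset.card_le_card (Finset.subset_univ R)
  have hT : Tc.card ≤ m := by
    simpa using Finset.card_le_card (Finset.subset_univ Tc)
  rw [bw, bw, bw, card_mkE]
  simp only [Finset.card_univ, Fintype.card_sum, Fintype.card_fin]
  have he : k + m - (R.card + Tc.card) = (k - R.card) + (m - Tc.card) := by omega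
  rw [he, pow_add, pow_add]
  ring

lemma bw_compl (p : ℝ) (T : Finset (Fin m)) :
    bw p Finset.univ Tᶜ = bw (1-p) Finset.univ T := by
  rw [bw, bw, Finset.card_compl]
  simp only [Finset.card_univ, Fintype.card_fin, sub_sub_cancel]
  have hT : T.card ≤ m := by simpa using Finset.card_le_card (Finset.subset_univ T)
  have : m - (m - T.card) = T.card := by omega
  rw [this]
  ring

lemma sum_compl_w (f : Finset (Fin m) → ℝ) (p : ℝ) :
    ∑ Tc : Finset (Fin m), bw p Finset.univ Tc * f Tcᶜ
      = ∑ T : Finset (Fin m), bw (1-p) Finset.univ T * f T := by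
  refine (Fintype.sum_bijective (fun T : Finset (Fin m) => Tᶜ)
    (Function.Involutive.bijective fun T => compl_compl T) _ _ fun T => ?_).symm
  show bw (1-p) Finset.univ T * f T = bw p Finset.univ Tᶜ * f Tᶜᶜ
  rw [compl_compl, bw_compl]

end Split


section Pairing

variable {k m : ℕ} (A : Matrix (Fin k) (Fin m) (ZMod 2))

lemma zmod2_pair_real (v a : ZMod 2) :
    (if v ≠ a then (1:ℝ) else 0) + (if v ≠ a + 1 then (1:ℝ) else 0) = 1 := by
  have h1 : ∀ b : ZMod 2, b + 1 ≠ b := by decide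
  have h2 : ∀ v a : ZMod 2, v ≠ a → v = a + 1 := by decide
  by_cases hva : v = a
  · subst hva
    rw [if_neg (fun hc => hc rfl), if_pos (Ne.symm (h1 v)), zero_add]
  · rw [if_pos hva, if_neg (fun hc => hc (h2 v a hva)), add_zero]

lemma sum_count_ge (g : ((Fin k ⊕ Fin m) → Option (ZMod 2)) → Fin k → ZMod 2)
    (R : Finset (Fin k)) (Tc : Finset (Fin m)) :
    ((R.card : ℝ) - hr A R Tcᶜ) * ((2:ℝ)^k / 2)
      ≤ ∑ s : Fin k → ZMod 2, ((Finset.univ.filter fun i : Fin k =>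
          g (fun j => if j ∈ mkE R Tc then none
            else some (Sum.elim s (Matrix.vecMul s A) j)) i ≠ s i).card : ℝ) := by
  classical
  set T : Finset (Fin m) := Tcᶜ with hT
  set obs : (Fin k → ZMod 2) → (Fin k ⊕ Fin m) → Option (ZMod 2) :=
    fun s j => if j ∈ mkE R Tc then none
      else some (Sum.elim s (Matrix.vecMul s A) j) with hobs
  have hcount : ∀ s, ∑ i ∈ R \ good A R T, (if g (obs s) i ≠ s i then (1:ℝ) else 0)
      ≤ ((Finset.univ.filter fun i => g (obs s) i ≠ s i).card : ℝ) := by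
    intro s
    rw [Finset.sum_boole]
    have hsub : (R \ good A R T).filter (fun i => g (obs s) i ≠ s i)
        ⊆ Finset.univ.filter (fun i => g (obs s) i ≠ s i) :=
      Finset.filter_subset_filter _ (Finset.subset_univ _)
    exact_mod_cast Finset.card_le_card hsub
  have hkey : ∀ i ∈ R \ good A R T,
      (2:ℝ)^k / 2 ≤ ∑ s : Fin k → ZMod 2, (if g (obs s) i ≠ s i then (1:ℝ) else 0) := by
    intro i hi
    obtain ⟨hiR, hig⟩ := Finset.mem_sdiff.1 hi
    obtain ⟨x, hxi, hxR, hxT⟩ := exists_kernel_vector A T hiR hig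
    have hobs_eq : ∀ s, obs (s + x) = obs s := by
      intro s
      funext j
      by_cases hj : j ∈ mkE R Tc
      · simp [hobs, hj]
      · cases j with
        | inl i' =>
          have hi' : i' ∉ R := fun h => hj (mem_mkE_inl.2 h)
          simp [hobs, hj, hxR i' hi']
        | inr t =>
          have ht : t ∈ T := by
            rw [hT, Finset.mem_compl]
            exact fun h => hj (mem_mkE_inr.2 h)
          simp [hobs, hj, Matrix.add_vecMul, hxT t ht]
    have hrefl : ∑ s : Fin k → ZMod 2, (if g (obs s) i ≠ s i + x i then (1:ℝ) else 0)
        = ∑ s : Fin k → ZMod 2, (if g (obs s) i ≠ s i then (1:ℝ) else 0) := by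
      refine Fintype.sum_bijective (fun s => s + x) ((Equiv.addRight x).bijective) _ _ fun s => ?_
      show (if g (obs s) i ≠ s i + x i then (1:ℝ) else 0)
          = (if g (obs (s + x)) i ≠ (s + x) i then (1:ℝ) else 0)
      rw [hobs_eq s]
      rfl
    have hpair : ∀ s : Fin k → ZMod 2,
        (if g (obs s) i ≠ s i then (1:ℝ) else 0)
          + (if g (obs s) i ≠ s i + x i then (1:ℝ) else 0) = 1 := by
      intro s
      rw [hxi]
      exact zmod2_pair_real (g (obs s) i) (s i)
    have hdouble : (∑ s : Fin k → ZMod 2, (if g (obs s) i ≠ s i then (1:ℝ) else 0))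
        + ∑ s : Fin k → ZMod 2, (if g (obs s) i ≠ s i then (1:ℝ) else 0) = 2^k := by
      nth_rewrite 2 [← hrefl]
      rw [← Finset.sum_add_distrib, Finset.sum_congr rfl (fun s _ => hpair s),
        Finset.sum_const, nsmul_eq_mul, mul_one, Finset.card_univ]
      simp [Fintype.card_fun]
    linarith
  calc ((R.card : ℝ) - hr A R T) * ((2:ℝ)^k / 2)
      = ∑ _i ∈ R \ good A R T, (2:ℝ)^k / 2 := by
        rw [Finset.sum_const, nsmul_eq_mul, Finset.card_sdiff_of_subset (good_subset A R T),
          Nat.cast_sub (Finset.card_le_card (good_subset A R T))]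
        rfl
    _ ≤ ∑ i ∈ R \ good A R T, ∑ s : Fin k → ZMod 2,
          (if g (obs s) i ≠ s i then (1:ℝ) else 0) := Finset.sum_le_sum hkey
    _ = ∑ s : Fin k → ZMod 2, ∑ i ∈ R \ good A R T,
          (if g (obs s) i ≠ s i then (1:ℝ) else 0) := Finset.sum_comm
    _ ≤ _ := Finset.sum_le_sum fun s _ => hcount s

end Pairing


section Expectation

variable {k m : ℕ} (A : Matrix (Fin k) (Fin m) (ZMod 2))

noncomputable def Dhr (p q : ℝ) : ℝ :=
  ∑ R : Finset (Fin k), ∑ T : Finset (Fin m),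
    bw p Finset.univ R * (bw q Finset.univ T * (hr A R T : ℝ))

noncomputable def Drk (p q : ℝ) : ℝ :=
  ∑ R : Finset (Fin k), ∑ T : Finset (Fin m),
    bw p Finset.univ R * (bw q Finset.univ T * (rk A R T : ℝ))

lemma sum_bw_univ {σ : Type*} [Fintype σ] [DecidableEq σ] (q : ℝ) :
    ∑ S : Finset σ, bw q Finset.univ S = 1 := by
  rw [← Finset.powerset_univ]
  exact sum_bw q Finset.univ

lemma sum_bw_card_univ {σ : Type*} [Fintype σ] [DecidableEq σ] (q : ℝ) :
    ∑ S : Finset σ, bw q Finset.univ S * (S.card : ℝ) = q * Fintype.card σ := by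
  rw [← Finset.powerset_univ, sum_bw_card q Finset.univ, Finset.card_univ]

lemma becBER_ge (g : ((Fin k ⊕ Fin m) → Option (ZMod 2)) → Fin k → ZMod 2)
    {ε : ℝ} (hk : 0 < k) (h0 : 0 ≤ ε) (h1 : ε ≤ 1) :
    ε * k - Dhr A ε (1-ε)
      ≤ 2 * k * becBER k (fun s => Sum.elim s (Matrix.vecMul s A)) g ε := by
  classical
  set c : (Fin k → ZMod 2) → Finset (Fin k ⊕ Fin m) → ℝ := fun s E =>
    ((Finset.univ.filter fun i : Fin k =>
      g (fun j => if j ∈ E then none else some (Sum.elim s (Matrix.vecMul s A) j)) i ≠ s i).card : ℝ)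
    with hc
  have hBER : becBER k (fun s => Sum.elim s (Matrix.vecMul s A)) g ε
      = (1/k) * ((1/2^k) * ∑ E : Finset (Fin k ⊕ Fin m),
          bw ε Finset.univ E * ∑ s : Fin k → ZMod 2, c s E) := by
    rw [becBER]
    congr 1
    rw [← Finset.mul_sum]
    congr 1
    rw [Finset.sum_comm]
    refine Finset.sum_congr rfl fun E _ => ?_
    rw [Finset.mul_sum]
    refine Finset.sum_congr rfl fun s _ => rfl
  have hwnn : ∀ (p : ℝ), 0 ≤ p → p ≤ 1 → ∀ (σ : Type) (_ : Fintype σ) (_ : DecidableEq σ), True := fun _ _ _ _ _ _ => trivial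
  have hmain : (2:ℝ)^k / 2 * (ε * k - Dhr A ε (1-ε))
      ≤ ∑ E : Finset (Fin k ⊕ Fin m), bw ε Finset.univ E * ∑ s : Fin k → ZMod 2, c s E := by
    rw [sum_split]
    have hstep : ∀ R : Finset (Fin k),
        bw ε Finset.univ R * ∑ T : Finset (Fin m), bw (1-ε) Finset.univ T *
            (((R.card : ℝ) - hr A R T) * ((2:ℝ)^k/2))
          ≤ ∑ Tc : Finset (Fin m), bw ε Finset.univ (mkE R Tc) * ∑ s, c s (mkE R Tc) := by
      intro R
      rw [← sum_compl_w (fun T => ((R.card : ℝ) - hr A R T) * ((2:ℝ)^k/2)) ε, Finset.mul_sum]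
      refine Finset.sum_le_sum fun Tc _ => ?_
      rw [bw_mkE, mul_assoc]
      refine mul_le_mul_of_nonneg_left ?_ (bw_nonneg h0 h1 _ _)
      refine mul_le_mul_of_nonneg_left ?_ (bw_nonneg h0 h1 _ _)
      exact sum_count_ge A g R Tc
    calc (2:ℝ)^k / 2 * (ε * k - Dhr A ε (1-ε))
        = ∑ R : Finset (Fin k), bw ε Finset.univ R *
            ∑ T : Finset (Fin m), bw (1-ε) Finset.univ T *
              (((R.card : ℝ) - hr A R T) * ((2:ℝ)^k/2)) := by
          set c0 : ℝ := (2:ℝ)^k/2 with hc0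
          have e1 : ∀ R : Finset (Fin k),
              ∑ T : Finset (Fin m), bw (1-ε) Finset.univ T *
                (((R.card : ℝ) - hr A R T) * c0)
              = c0 * (R.card : ℝ)
                - c0 * ∑ T : Finset (Fin m), bw (1-ε) Finset.univ T * (hr A R T : ℝ) := by
            intro R
            have e0 : ∀ T : Finset (Fin m), bw (1-ε) Finset.univ T *
                (((R.card : ℝ) - hr A R T) * c0)
                = c0 * (R.card : ℝ) * bw (1-ε) Finset.univ T
                  - c0 * (bw (1-ε) Finset.univ T * (hr A R T : ℝ)) := fun T => by ring
            rw [Finset.sum_congr rfl fun T _ => e0 T, Finset.sum_sub_distrib,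
              ← Finset.mul_sum, ← Finset.mul_sum, sum_bw_univ, mul_one]
          rw [Finset.sum_congr rfl fun R _ => by rw [e1 R]]
          have e2 : ∀ R : Finset (Fin k), bw ε Finset.univ R *
              (c0 * (R.card : ℝ)
                - c0 * ∑ T : Finset (Fin m), bw (1-ε) Finset.univ T * (hr A R T : ℝ))
              = c0 * (bw ε Finset.univ R * (R.card : ℝ))
                - c0 * (bw ε Finset.univ R *
                    ∑ T : Finset (Fin m), bw (1-ε) Finset.univ T * (hr A R T : ℝ)) :=
            fun R => by ring
          rw [Finset.sum_congr rfl fun R _ => e2 R, Finset.sum_sub_distrib, ← Finset.mul_sum,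
            ← Finset.mul_sum, sum_bw_card_univ, Fintype.card_fin]
          have e3 : ∑ R : Finset (Fin k), bw ε Finset.univ R *
              ∑ T : Finset (Fin m), bw (1-ε) Finset.univ T * (hr A R T : ℝ)
              = Dhr A ε (1-ε) := by
            rw [Dhr]
            exact Finset.sum_congr rfl fun R _ => Finset.mul_sum _ _ _
          rw [e3]
          ring
      _ ≤ _ := Finset.sum_le_sum fun R _ => hstep R
  have h2k : (0:ℝ) < 2^k := by positivity
  have hkR : (0:ℝ) < k := by exact_mod_cast hk
  rw [hBER]
  have hfac : 2 * (k:ℝ) * ((1/k) * ((1/2^k) * (∑ E : Finset (Fin k ⊕ Fin m),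
      bw ε Finset.univ E * ∑ s : Fin k → ZMod 2, c s E)))
      = (2/2^k) * ∑ E : Finset (Fin k ⊕ Fin m),
          bw ε Finset.univ E * ∑ s : Fin k → ZMod 2, c s E := by
    field_simp
  rw [hfac]
  have hpos : (0:ℝ) ≤ 2/2^k := by positivity
  have h5 := mul_le_mul_of_nonneg_left hmain hpos
  calc ε * k - Dhr A ε (1-ε)
      = (2/2^k) * ((2:ℝ)^k/2 * (ε * k - Dhr A ε (1-ε))) := by field_simp
    _ ≤ _ := h5


lemma Dhr_le_Drk {p q : ℝ} (hp0 : 0 ≤ p) (hp1 : p ≤ 1) (hq0 : 0 ≤ q) (hq1 : q ≤ 1) :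
    Dhr A p q ≤ Drk A p q := by
  refine Finset.sum_le_sum fun R _ => Finset.sum_le_sum fun T _ => ?_
  have h1 : (hr A R T : ℝ) ≤ rk A R T := by exact_mod_cast hr_le_rk A R T
  exact mul_le_mul_of_nonneg_left
    (mul_le_mul_of_nonneg_left h1 (bw_nonneg hq0 hq1 _ _)) (bw_nonneg hp0 hp1 _ _)

lemma rows_bound {p β q : ℝ} (hp0 : 0 ≤ p) (hp1 : p ≤ 1) (hb0 : 0 ≤ β) (hb1 : β ≤ 1)
    (hq0 : 0 ≤ q) (hq1 : q ≤ 1) :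
    Drk A (p*β) q ≤ q * m - (1-β) * Dhr A p q := by
  classical
  have inner : ∀ T : Finset (Fin m),
      ∑ R : Finset (Fin k), bw (p*β) Finset.univ R * (rk A R T : ℝ)
        ≤ (T.card : ℝ) - (1-β) * ∑ R' : Finset (Fin k), bw p Finset.univ R' * (hr A R' T : ℝ) := by
    intro T
    have hinner : ∀ R' : Finset (Fin k),
        (∑ R ∈ R'.powerset, bw β R' R * (rk A R T : ℝ))
          ≤ (T.card : ℝ) - (1-β) * (hr A R' T : ℝ) := by
      intro R'
      have hpt : ∀ R ∈ R'.powerset, bw β R' R * (rk A R T : ℝ)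
          ≤ bw β R' R * (((rk A R' T : ℝ) - hr A R' T) + ((good A R' T ∩ R).card : ℝ)) := by
        intro R hR
        refine mul_le_mul_of_nonneg_left ?_ (bw_nonneg hb0 hb1 _ _)
        have hnat : rk A R T + hr A R' T ≤ rk A R' T + (good A R' T ∩ R).card := by
          have h1 := rk_proj_bound A (Finset.mem_powerset.1 hR) T
          have h2 : (good A R' T ∩ R).card + (good A R' T \ R).card = hr A R' T :=
            Finset.card_inter_add_card_sdiff _ _
          omega
        have hcast := (Nat.cast_le (α := ℝ)).2 hnat
        push_cast at hcast
        linarith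
      calc ∑ R ∈ R'.powerset, bw β R' R * (rk A R T:ℝ)
          ≤ ∑ R ∈ R'.powerset, bw β R' R *
              (((rk A R' T : ℝ) - hr A R' T) + ((good A R' T ∩ R).card : ℝ)) :=
            Finset.sum_le_sum hpt
        _ = ((rk A R' T : ℝ) - hr A R' T) + β * (hr A R' T : ℝ) := by
            rw [Finset.sum_congr rfl (fun R _ => mul_add _ _ _), Finset.sum_add_distrib,
              ← Finset.sum_mul, sum_bw, one_mul, sum_bw_inter β (good_subset A R' T)]
            rfl
        _ ≤ (T.card : ℝ) - (1-β) * (hr A R' T : ℝ) := by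
            have : (rk A R' T : ℝ) ≤ T.card := by exact_mod_cast rk_le_card A R' T
            linarith
    rw [← Finset.powerset_univ, ← bw_thin p β Finset.univ (fun R => (rk A R T : ℝ))]
    calc ∑ R' ∈ Finset.univ.powerset, bw p Finset.univ R' *
            ∑ R ∈ R'.powerset, bw β R' R * (rk A R T : ℝ)
        ≤ ∑ R' ∈ Finset.univ.powerset, bw p Finset.univ R' *
            ((T.card : ℝ) - (1-β) * (hr A R' T : ℝ)) :=
          Finset.sum_le_sum fun R' _ =>
            mul_le_mul_of_nonneg_left (hinner R') (bw_nonneg hp0 hp1 _ _)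
      _ = (T.card : ℝ) - (1-β) * ∑ R' ∈ Finset.univ.powerset,
            bw p Finset.univ R' * (hr A R' T : ℝ) := by
          rw [Finset.sum_congr rfl (fun R' _ => show
              bw p Finset.univ R' * ((T.card : ℝ) - (1-β) * (hr A R' T : ℝ))
              = (T.card : ℝ) * bw p Finset.univ R'
                - (1-β) * (bw p Finset.univ R' * (hr A R' T : ℝ)) from by ring),
            Finset.sum_sub_distrib, ← Finset.mul_sum, ← Finset.mul_sum, sum_bw, mul_one]
      _ = (T.card : ℝ) - (1-β) * ∑ R' : Finset (Fin k),
            bw p Finset.univ R' * (hr A R' T : ℝ) := by rw [Finset.powerset_univ]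
  have hDrk : Drk A (p*β) q = ∑ T : Finset (Fin m), bw q Finset.univ T *
      ∑ R : Finset (Fin k), bw (p*β) Finset.univ R * (rk A R T : ℝ) := by
    rw [Drk, Finset.sum_comm]
    refine Finset.sum_congr rfl fun T _ => ?_
    rw [Finset.mul_sum]
    exact Finset.sum_congr rfl fun R _ => by ring
  have hDhr : Dhr A p q = ∑ T : Finset (Fin m), bw q Finset.univ T *
      ∑ R' : Finset (Fin k), bw p Finset.univ R' * (hr A R' T : ℝ) := by
    rw [Dhr, Finset.sum_comm]
    refine Finset.sum_congr rfl fun T _ => ?_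
    rw [Finset.mul_sum]
    exact Finset.sum_congr rfl fun R _ => by ring
  rw [hDrk, hDhr]
  calc ∑ T : Finset (Fin m), bw q Finset.univ T *
        ∑ R : Finset (Fin k), bw (p*β) Finset.univ R * (rk A R T : ℝ)
      ≤ ∑ T : Finset (Fin m), bw q Finset.univ T *
          ((T.card : ℝ) - (1-β) * ∑ R' : Finset (Fin k),
            bw p Finset.univ R' * (hr A R' T : ℝ)) :=
        Finset.sum_le_sum fun T _ =>
          mul_le_mul_of_nonneg_left (inner T) (bw_nonneg hq0 hq1 _ _)
    _ = q * m - (1-β) * ∑ T : Finset (Fin m), bw q Finset.univ T *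
          ∑ R' : Finset (Fin k), bw p Finset.univ R' * (hr A R' T : ℝ) := by
        rw [Finset.sum_congr rfl (fun T _ => show
            bw q Finset.univ T * ((T.card : ℝ) - (1-β) * ∑ R' : Finset (Fin k),
              bw p Finset.univ R' * (hr A R' T : ℝ))
            = bw q Finset.univ T * (T.card : ℝ)
              - (1-β) * (bw q Finset.univ T * ∑ R' : Finset (Fin k),
                  bw p Finset.univ R' * (hr A R' T : ℝ)) from by ring),
          Finset.sum_sub_distrib, ← Finset.mul_sum, sum_bw_card_univ, Fintype.card_fin]

lemma cols_bound {p q α : ℝ} (hp0 : 0 ≤ p) (hp1 : p ≤ 1) (hq0 : 0 ≤ q) (hq1 : q ≤ 1)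
    (ha0 : 0 ≤ α) (ha1 : α ≤ 1) :
    α * Drk A p q ≤ Drk A p (q*α) := by
  classical
  have inner : ∀ R : Finset (Fin k),
      α * ∑ T : Finset (Fin m), bw q Finset.univ T * (rk A R T : ℝ)
        ≤ ∑ T : Finset (Fin m), bw (q*α) Finset.univ T * (rk A R T : ℝ) := by
    intro R
    rw [← Finset.powerset_univ, ← bw_thin q α Finset.univ (fun T => (rk A R T : ℝ)),
      Finset.powerset_univ, Finset.mul_sum]
    refine Finset.sum_le_sum fun T' _ => ?_
    rw [show α * (bw q Finset.univ T' * (rk A R T' : ℝ))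
        = bw q Finset.univ T' * (α * (rk A R T' : ℝ)) from by ring]
    refine mul_le_mul_of_nonneg_left ?_ (bw_nonneg hq0 hq1 _ _)
    obtain ⟨B, hBsub, hBcard, hBle⟩ := exists_col_basis A R T'
    calc α * (rk A R T' : ℝ)
        = α * (B.card : ℝ) := by rw [hBcard]
      _ = ∑ T ∈ T'.powerset, bw α T' T * ((B ∩ T).card : ℝ) := (sum_bw_inter α hBsub).symm
      _ ≤ ∑ T ∈ T'.powerset, bw α T' T * (rk A R T : ℝ) := by
          refine Finset.sum_le_sum fun T hT => ?_
          refine mul_le_mul_of_nonneg_left ?_ (bw_nonneg ha0 ha1 _ _)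
          exact_mod_cast hBle T (Finset.mem_powerset.1 hT)
  have hD1 : Drk A p q = ∑ R : Finset (Fin k), bw p Finset.univ R *
      ∑ T : Finset (Fin m), bw q Finset.univ T * (rk A R T : ℝ) :=
    Finset.sum_congr rfl fun R _ => (Finset.mul_sum _ _ _).symm
  have hD2 : Drk A p (q*α) = ∑ R : Finset (Fin k), bw p Finset.univ R *
      ∑ T : Finset (Fin m), bw (q*α) Finset.univ T * (rk A R T : ℝ) :=
    Finset.sum_congr rfl fun R _ => (Finset.mul_sum _ _ _).symm
  rw [hD1, hD2, Finset.mul_sum]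
  refine Finset.sum_le_sum fun R _ => ?_
  rw [show α * (bw p Finset.univ R * ∑ T : Finset (Fin m),
      bw q Finset.univ T * (rk A R T : ℝ))
      = bw p Finset.univ R * (α * ∑ T : Finset (Fin m),
          bw q Finset.univ T * (rk A R T : ℝ)) from by ring]
  exact mul_le_mul_of_nonneg_left (inner R) (bw_nonneg hp0 hp1 _ _)

end Expectation

end TwoPointAux

open TwoPointAux in
/-- Two-point converse for systematic linear codes (Theorem 3): if the systematic
linear code `x ↦ (x, xA)` of rate `1/ρ` achieves `BER(ε₁) ≤ δ₁ ≤ ε₁/2` (for some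
decoder, e.g. the optimal one), then for every decoder its BER at `ε₂ < ε₁` is at
least `(ε₂ - ((1-ε₂)/(1-ε₁))·[(ε₂/ε₁)γ + (ρ-1)(1-ε₁) - γ])/2`, where `γ = ε₁ - 2δ₁`. -/
theorem systematic_linear_two_point_converse {k m : ℕ} (hk : 0 < k)
    (A : Matrix (Fin k) (Fin m) (ZMod 2))
    (ρ : ℝ) (hρ : ρ = ((k + m : ℕ) : ℝ) / k)
    (ε₁ ε₂ δ₁ : ℝ) (hε₁ : ε₁ ∈ Set.Ioo (0:ℝ) 1) (hε₂ : ε₂ ∈ Set.Ioo (0:ℝ) 1)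
    (h21 : ε₂ < ε₁) (hδ₁ : δ₁ ≤ ε₁ / 2)
    (γ : ℝ) (hγ : γ = ε₁ - 2 * δ₁)
    (g₁ g₂ : ((Fin k ⊕ Fin m) → Option (ZMod 2)) → Fin k → ZMod 2)
    (hach : becBER k (fun s => Sum.elim s (Matrix.vecMul s A)) g₁ ε₁ ≤ δ₁) :
    becBER k (fun s => Sum.elim s (Matrix.vecMul s A)) g₂ ε₂ ≥
      (ε₂ - (1 - ε₂) / (1 - ε₁) * ((ε₂ / ε₁) * γ + (ρ - 1) * (1 - ε₁) - γ)) / 2 := by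
  obtain ⟨hε₁0, hε₁1⟩ := hε₁
  obtain ⟨hε₂0, hε₂1⟩ := hε₂
  have hkR : (0:ℝ) < k := by exact_mod_cast hk
  set β : ℝ := ε₂ / ε₁ with hβdef
  set αc : ℝ := (1 - ε₁) / (1 - ε₂) with hαdef
  have hε₁ne : ε₁ ≠ 0 := ne_of_gt hε₁0
  have h1ε₁ : (0:ℝ) < 1 - ε₁ := by linarith
  have h1ε₂ : (0:ℝ) < 1 - ε₂ := by linarith
  have hβ : ε₁ * β = ε₂ := by rw [hβdef]; field_simp
  have hα : (1 - ε₂) * αc = 1 - ε₁ := by rw [hαdef]; field_simp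
  have hβ0 : 0 ≤ β := by positivity
  have hβ1 : β ≤ 1 := by
    rw [hβdef, div_le_one hε₁0]; linarith
  have hα0 : 0 ≤ αc := by positivity
  have hαpos : 0 < αc := by
    rw [hαdef]; positivity
  have hα1 : αc ≤ 1 := by
    rw [hαdef, div_le_one h1ε₂]; linarith
  -- Step 1: achievability at ε₁ lower-bounds Dhr(ε₁, 1-ε₁)
  have h1 := becBER_ge A g₁ hk (le_of_lt hε₁0) (le_of_lt hε₁1)
  have hγk : γ * k ≤ Dhr A ε₁ (1-ε₁) := by
    have h2 : 2 * (k:ℝ) * becBER k (fun s => Sum.elim s (Matrix.vecMul s A)) g₁ ε₁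
        ≤ 2 * k * δ₁ := by
      have : (0:ℝ) ≤ 2 * k := by positivity
      exact mul_le_mul_of_nonneg_left hach this
    rw [hγ]
    nlinarith [h1, h2]
  -- Step 2: the chain at ε₂
  set x : ℝ := Dhr A ε₂ (1-ε₂) with hx
  set y : ℝ := Drk A ε₂ (1-ε₂) with hy
  set z : ℝ := Drk A ε₂ (1-ε₁) with hz
  have c1 : x ≤ y := Dhr_le_Drk A (le_of_lt hε₂0) (le_of_lt hε₂1) (by linarith) (by linarith)
  have c3 : αc * y ≤ z := by
    have := cols_bound A (p := ε₂) (q := 1-ε₂) (α := αc)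
      (le_of_lt hε₂0) (le_of_lt hε₂1) (by linarith) (by linarith) hα0 hα1
    rw [hα] at this
    exact this
  have c2 : z ≤ (1-ε₁) * m - (1-β) * Dhr A ε₁ (1-ε₁) := by
    have := rows_bound A (p := ε₁) (β := β) (q := 1-ε₁)
      (le_of_lt hε₁0) (le_of_lt hε₁1) hβ0 hβ1 (by linarith) (by linarith)
    rw [hβ] at this
    exact this
  have hxbound : αc * x ≤ (1-ε₁) * m - (1-β) * (γ * k) := by
    have h6 : αc * x ≤ αc * y := mul_le_mul_of_nonneg_left c1 hα0
    have h7 : (1-β) * (γ * k) ≤ (1-β) * Dhr A ε₁ (1-ε₁) :=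
      mul_le_mul_of_nonneg_left hγk (by linarith)
    linarith
  -- Step 3: converse at ε₂
  have c0 := becBER_ge A g₂ hk (le_of_lt hε₂0) (le_of_lt hε₂1)
  -- arithmetic
  have hm : (ρ - 1) * k = m := by
    rw [hρ]
    push_cast
    field_simp
    ring
  set T : ℝ := (ε₂ - (1 - ε₂) / (1 - ε₁) * ((ε₂ / ε₁) * γ + (ρ - 1) * (1 - ε₁) - γ)) / 2 with hT
  have e1 : αc * (2 * k * T) = αc * (ε₂ * k) - ((1-ε₁) * m - (1-β) * (γ * k)) := by
    rw [hT, ← hm, hαdef, hβdef]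
    field_simp
    ring
  have hfin : 2 * (k:ℝ) * T ≤ 2 * k * becBER k (fun s => Sum.elim s (Matrix.vecMul s A)) g₂ ε₂ := by
    have h8 : αc * (2 * k * T) ≤ αc * (ε₂ * k - x) := by
      rw [e1]
      nlinarith [hxbound]
    have h9 : 2 * (k:ℝ) * T ≤ ε₂ * k - x :=
      le_of_mul_le_mul_left (by linarith [h8]) hαpos
    linarith [c0]
  have := le_of_mul_le_mul_left (by linarith [hfin] :
      (2 * (k:ℝ)) * T ≤ (2 * k) * becBER k (fun s => Sum.elim s (Matrix.vecMul s A)) g₂ ε₂)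
    (by positivity : (0:ℝ) < 2 * k)
  exact this
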